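/- Let f = (f_1,…,f_n) be polynomials in R[x] with each deg f_i ≥ 1, δ_f = Σ_{i=1}^n (deg f_i − 1), and let δ_1, δ_2 ≥ 0 be integers. For i = 1,2 let L_i and L_i' be R-linear functionals on R[x] such that L_i and L_i' both annul (f)^{≤δ_f+δ_i}_x and L_i' agrees with L_i on all polynomials of total degree ≤ δ_f + δ_i. Fix monotonous difference derivatives ∇f_i of the f_i and, for F ∈ R[x], a monotonous difference derivative ∇F. Then for every F of total degree ≤ δ_f + δ_1 + δ_2 + 1: L_1'(x_*).( L_2'(y_*).det‖∇f ∇F; f(x) F(x)‖ ) = L_1(x_*).( L_2(y_*).det‖∇f ∇F; f(x) F(x)‖ ), i.e. the extended functional on R[x^{≤δ_f+δ_1+δ_2+1}] depends only on the restrictions of L_1 to R[x^{≤δ_f+δ_1}] and of L_2 to R[x^{≤δ_f+δ_2}]. -/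

import Mathlib

open MvPolynomial Finset

noncomputable section

variable {R : Type*} [CommRing R] {n : ℕ}

/-- Total degree of a multivariate polynomial, valued in `WithBot ℤ`,
with the convention `deg 0 = ⊥` (i.e. `-∞`). -/
def mdeg {σ S : Type*} [CommSemiring S] (F : MvPolynomial σ S) : WithBot ℤ :=
  F.support.sup fun m => ((m.sum fun _ e => e : ℕ) : ℤ)

/-- The embedding `R[x] → R[x,y]`, `x_i ↦ x_i` (the x-variables are `Sum.inl`,
the y-variables are `Sum.inr`). -/
def toX : MvPolynomial (Fin n) R →ₐ[R] MvPolynomial (Fin n ⊕ Fin n) R :=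
  rename Sum.inl

/-- The embedding `R[x] → R[x,y]`, `x_i ↦ y_i`. -/
def toY : MvPolynomial (Fin n) R →ₐ[R] MvPolynomial (Fin n ⊕ Fin n) R :=
  rename Sum.inr

/-- `D = (∇¹F, …, ∇ⁿF)` is a difference derivative of `F`:
`∑ k, (x_k - y_k) * ∇ᵏF(x,y) = F(x) - F(y)`. -/
def IsDiffDeriv (F : MvPolynomial (Fin n) R)
    (D : Fin n → MvPolynomial (Fin n ⊕ Fin n) R) : Prop :=
  ∑ k : Fin n, (X (Sum.inl k) - X (Sum.inr k)) * D k = toX F - toY F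

/-- A difference derivative of `F` is monotonous if each component has total degree
`≤ deg F - 1` (equivalently `deg (∇ᵏF) + 1 ≤ deg F` in `WithBot ℤ`). -/
def IsMonotonous (F : MvPolynomial (Fin n) R)
    (D : Fin n → MvPolynomial (Fin n ⊕ Fin n) R) : Prop :=
  ∀ k, mdeg (D k) + 1 ≤ mdeg F

/-- `δ_f = ∑ᵢ (deg fᵢ - 1)`. -/
def deltaF (f : Fin n → MvPolynomial (Fin n) R) : ℤ :=
  ∑ i, (((f i).totalDegree : ℤ) - 1)

/-- `(f)^{≤ d}_x`: sums `∑ fᵢ gᵢ` with `deg fᵢ + deg gᵢ ≤ d` for every `i`. -/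
def boundedSpan (f : Fin n → MvPolynomial (Fin n) R) (d : WithBot ℤ) :
    Set (MvPolynomial (Fin n) R) :=
  {F | ∃ g : Fin n → MvPolynomial (Fin n) R,
    F = ∑ i, f i * g i ∧ ∀ i, mdeg (f i) + mdeg (g i) ≤ d}

/-- A linear functional `L` annuls a set `S` if it vanishes on it. -/
def Annuls (L : MvPolynomial (Fin n) R →ₗ[R] R) (S : Set (MvPolynomial (Fin n) R)) : Prop :=
  ∀ F ∈ S, L F = 0

/-- `L(y_*).P` : apply the functional `L` to the `y`-part of `P ∈ R[x,y]`,
i.e. if `P = ∑_α A_α(x) y^α` then `L(y_*).P = ∑_α L(y^α) • A_α(x)`. -/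
def applyY (L : MvPolynomial (Fin n) R →ₗ[R] R) (P : MvPolynomial (Fin n ⊕ Fin n) R) :
    MvPolynomial (Fin n) R :=
  ∑ m ∈ P.support,
    C (L (monomial (Finsupp.sumFinsuppAddEquivProdFinsupp m).2 (1 : R)) * P.coeff m) *
      monomial (Finsupp.sumFinsuppAddEquivProdFinsupp m).1 (1 : R)

/-- `det‖∇f(x,y) ∇F(x,y); f(x) F(x)‖` : the `(n+1) × (n+1)` determinant whose entry `(k,i)`
is `∇ᵏfᵢ(x,y)` for `k, i ≤ n`, entry `(k, n+1)` is `∇ᵏF(x,y)`, entry `(n+1, i)` is `fᵢ(x)`,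
and entry `(n+1, n+1)` is `F(x)`.  Here `Df i` is the tuple `(∇¹fᵢ, …, ∇ⁿfᵢ)`. -/
def ddetX (f : Fin n → MvPolynomial (Fin n) R)
    (Df : Fin n → Fin n → MvPolynomial (Fin n ⊕ Fin n) R)
    (F : MvPolynomial (Fin n) R) (DF : Fin n → MvPolynomial (Fin n ⊕ Fin n) R) :
    MvPolynomial (Fin n ⊕ Fin n) R :=
  Matrix.det (Matrix.of fun k i : Fin (n + 1) =>
    if hk : (k : ℕ) < n then
      if hi : (i : ℕ) < n then Df ⟨i, hi⟩ ⟨k, hk⟩ else DF ⟨k, hk⟩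
    else
      if hi : (i : ℕ) < n then toX (f ⟨i, hi⟩) else toX F)

/-- `det‖∇f(x,y) ∇F(x,y); f(y) F(y)‖` : as `ddetX` but with last row `(f₁(y),…,fₙ(y),F(y))`. -/
def ddetY (f : Fin n → MvPolynomial (Fin n) R)
    (Df : Fin n → Fin n → MvPolynomial (Fin n ⊕ Fin n) R)
    (F : MvPolynomial (Fin n) R) (DF : Fin n → MvPolynomial (Fin n ⊕ Fin n) R) :
    MvPolynomial (Fin n ⊕ Fin n) R :=
  Matrix.det (Matrix.of fun k i : Fin (n + 1) =>
    if hk : (k : ℕ) < n then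
      if hi : (i : ℕ) < n then Df ⟨i, hi⟩ ⟨k, hk⟩ else DF ⟨k, hk⟩
    else
      if hi : (i : ℕ) < n then toY (f ⟨i, hi⟩) else toY F)

section AuxDeg
variable {S : Type*} [CommRing S] {σ : Type*}

def dsum (m : σ →₀ ℕ) : ℤ := ((m.sum fun _ e => e : ℕ) : ℤ)

lemma dsum_nonneg (m : σ →₀ ℕ) : 0 ≤ dsum m := Int.ofNat_nonneg _

lemma dsum_add (a b : σ →₀ ℕ) : dsum (a + b) = dsum a + dsum b := by
  classical
  unfold dsum
  rw [Finsupp.sum_add_index (h := fun _ e => (e:ℕ)) (fun _ _ => rfl) (fun _ _ _ _ => rfl)]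
  push_cast; ring

def DegLE (P : MvPolynomial σ S) (d : ℤ) : Prop := ∀ m ∈ P.support, dsum m ≤ d

lemma mdeg_le_coe_iff {P : MvPolynomial σ S} {d : ℤ} :
    mdeg P ≤ (d : WithBot ℤ) ↔ DegLE P d := by
  rw [mdeg, Finset.sup_le_iff]
  constructor <;> intro h m hm <;> have := h m hm <;> exact_mod_cast this

lemma mdeg_le_totalDegree (P : MvPolynomial σ S) :
    mdeg P ≤ ((P.totalDegree : ℤ) : WithBot ℤ) := by
  rw [mdeg, Finset.sup_le_iff]
  intro m hm
  exact_mod_cast MvPolynomial.le_totalDegree hm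

lemma degLE_zero (d : ℤ) : DegLE (0 : MvPolynomial σ S) d := by
  intro m hm; simp at hm

lemma degLE_mono {P : MvPolynomial σ S} {d e : ℤ} (h : DegLE P d) (hde : d ≤ e) : DegLE P e :=
  fun m hm => (h m hm).trans hde

lemma degLE_add {P Q : MvPolynomial σ S} {d : ℤ} (hP : DegLE P d) (hQ : DegLE Q d) :
    DegLE (P + Q) d := by
  classical
  intro m hm
  rcases Finset.mem_union.mp (MvPolynomial.support_add hm) with h | h
  · exact hP m h
  · exact hQ m h

lemma degLE_sum {α : Type*} {s : Finset α} {g : α → MvPolynomial σ S} {d : ℤ}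
    (h : ∀ i ∈ s, DegLE (g i) d) : DegLE (∑ i ∈ s, g i) d := by
  classical
  induction s using Finset.induction_on with
  | empty => simpa using degLE_zero d
  | insert _ _ hx ih =>
    rw [Finset.sum_insert hx]
    exact degLE_add (h _ (Finset.mem_insert_self _ _))
      (ih fun i hi => h i (Finset.mem_insert_of_mem hi))

lemma degLE_mul {P Q : MvPolynomial σ S} {a b : ℤ} (hP : DegLE P a) (hQ : DegLE Q b) :
    DegLE (P * Q) (a + b) := by
  classical
  intro m hm
  rcases Finset.mem_add.mp (MvPolynomial.support_mul P Q hm) with ⟨u, hu, v, hv, rfl⟩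
  rw [dsum_add]
  exact add_le_add (hP u hu) (hQ v hv)

lemma degLE_monomial (a : σ →₀ ℕ) (c : S) : DegLE (MvPolynomial.monomial a c) (dsum a) := by
  classical
  intro m hm
  rw [MvPolynomial.support_monomial] at hm
  split at hm
  · simp at hm
  · simp at hm; subst hm; exact le_refl _

lemma degLE_one : DegLE (1 : MvPolynomial σ S) 0 := by
  have := degLE_monomial (0 : σ →₀ ℕ) (1 : S)
  simpa [dsum, MvPolynomial.monomial_zero'] using this

lemma degLE_smul {α : Type*} [SMulZeroClass α S] (z : α) {P : MvPolynomial σ S} {d : ℤ}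
    (h : DegLE P d) : DegLE (z • P) d := fun m hm => h m (MvPolynomial.support_smul hm)

lemma degLE_prod {α : Type*} {s : Finset α} {g : α → MvPolynomial σ S} {b : α → ℤ}
    (h : ∀ i ∈ s, DegLE (g i) (b i)) : DegLE (∏ i ∈ s, g i) (∑ i ∈ s, b i) := by
  classical
  induction s using Finset.induction_on with
  | empty => simpa using degLE_one
  | insert _ _ hx ih =>
    rw [Finset.prod_insert hx, Finset.sum_insert hx]
    exact degLE_mul (h _ (Finset.mem_insert_self _ _))
      (ih fun i hi => h i (Finset.mem_insert_of_mem hi))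

lemma degLE_det {m : ℕ} (A : Matrix (Fin m) (Fin m) (MvPolynomial σ S)) (d : ℤ)
    (h : ∀ τ : Equiv.Perm (Fin m), DegLE (∏ k, A (τ k) k) d) : DegLE A.det d := by
  rw [Matrix.det_apply]
  exact degLE_sum fun τ _ => degLE_smul _ (h τ)

end AuxDeg
section AuxApply
variable {R : Type*} [CommRing R] {n : ℕ}

/-- Split a monomial exponent on `Fin n ⊕ Fin n` into its x- and y-parts. -/
abbrev msplit (m : (Fin n ⊕ Fin n) →₀ ℕ) : ((Fin n →₀ ℕ) × (Fin n →₀ ℕ)) :=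
  Finsupp.sumFinsuppAddEquivProdFinsupp m

/-- Combine x- and y-exponents into an exponent on `Fin n ⊕ Fin n`. -/
def mpack (a b : Fin n →₀ ℕ) : (Fin n ⊕ Fin n) →₀ ℕ :=
  a.mapDomain Sum.inl + b.mapDomain Sum.inr

lemma msplit_mpack (a b : Fin n →₀ ℕ) : msplit (mpack a b) = (a, b) := by
  classical
  apply Prod.ext
  · ext x
    rw [Finsupp.fst_sumFinsuppAddEquivProdFinsupp]
    simp [mpack, Finsupp.mapDomain_apply Sum.inl_injective,
      Finsupp.mapDomain_notin_range _ _ (by simp : Sum.inl x ∉ Set.range Sum.inr)]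
  · ext y
    rw [Finsupp.snd_sumFinsuppAddEquivProdFinsupp]
    simp [mpack, Finsupp.mapDomain_apply Sum.inr_injective,
      Finsupp.mapDomain_notin_range _ _ (by simp : Sum.inr y ∉ Set.range Sum.inl)]

lemma mpack_msplit (m : (Fin n ⊕ Fin n) →₀ ℕ) : mpack (msplit m).1 (msplit m).2 = m := by
  classical
  ext s
  cases s with
  | inl x =>
    simp only [mpack, Finsupp.add_apply,
      Finsupp.mapDomain_apply Sum.inl_injective,
      Finsupp.mapDomain_notin_range _ _ (by simp : Sum.inl x ∉ Set.range Sum.inr)]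
    rw [Finsupp.fst_sumFinsuppAddEquivProdFinsupp, add_zero]
  | inr y =>
    simp only [mpack, Finsupp.add_apply,
      Finsupp.mapDomain_apply Sum.inr_injective,
      Finsupp.mapDomain_notin_range _ _ (by simp : Sum.inr y ∉ Set.range Sum.inl)]
    rw [Finsupp.snd_sumFinsuppAddEquivProdFinsupp, zero_add]

lemma dsum_mapDomain {α β : Type*} (g : α → β) (a : α →₀ ℕ) :
    dsum (a.mapDomain g) = dsum a := by
  classical
  unfold dsum
  rw [Finsupp.sum_mapDomain_index (fun _ => rfl) (fun _ _ _ => rfl)]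

lemma dsum_mpack (a b : Fin n →₀ ℕ) : dsum (mpack a b) = dsum a + dsum b := by
  rw [mpack, dsum_add, dsum_mapDomain, dsum_mapDomain]

lemma dsum_split (m : (Fin n ⊕ Fin n) →₀ ℕ) :
    dsum m = dsum (msplit m).1 + dsum (msplit m).2 := by
  conv_lhs => rw [← mpack_msplit m]
  rw [dsum_mpack]

lemma toX_mul_toY_monomial (a b : Fin n →₀ ℕ) (c e : R) :
    toX (monomial a c) * toY (monomial b e) = monomial (mpack a b) (c * e) := by
  rw [toX, toY, rename_monomial, rename_monomial, monomial_mul, mpack]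

end AuxApply
section AuxApplyY
variable {R : Type*} [CommRing R] {n : ℕ}

lemma applyY_eq_sum_subset (L : MvPolynomial (Fin n) R →ₗ[R] R)
    {P : MvPolynomial (Fin n ⊕ Fin n) R} {s : Finset ((Fin n ⊕ Fin n) →₀ ℕ)}
    (h : P.support ⊆ s) :
    applyY L P = ∑ m ∈ s,
      C (L (monomial (msplit m).2 1) * P.coeff m) * monomial (msplit m).1 1 := by
  rw [applyY]
  exact Finset.sum_subset h fun m _ hm => by
    rw [MvPolynomial.notMem_support_iff.mp hm, mul_zero, map_zero, zero_mul]

lemma applyY_add (L : MvPolynomial (Fin n) R →ₗ[R] R)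
    (P Q : MvPolynomial (Fin n ⊕ Fin n) R) :
    applyY L (P + Q) = applyY L P + applyY L Q := by
  classical
  rw [applyY_eq_sum_subset L (s := P.support ∪ Q.support) MvPolynomial.support_add,
    applyY_eq_sum_subset L (s := P.support ∪ Q.support) Finset.subset_union_left,
    applyY_eq_sum_subset L (s := P.support ∪ Q.support) Finset.subset_union_right,
    ← Finset.sum_add_distrib]
  apply Finset.sum_congr rfl
  intro m _
  rw [MvPolynomial.coeff_add, mul_add, map_add, add_mul]

lemma applyY_sum (L : MvPolynomial (Fin n) R →ₗ[R] R) {α : Type*} (s : Finset α)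
    (g : α → MvPolynomial (Fin n ⊕ Fin n) R) :
    applyY L (∑ i ∈ s, g i) = ∑ i ∈ s, applyY L (g i) := by
  classical
  induction s using Finset.induction_on with
  | empty => simp [applyY]
  | insert _ _ hx ih => rw [Finset.sum_insert hx, Finset.sum_insert hx, applyY_add, ih]

lemma applyY_monomial (L : MvPolynomial (Fin n) R →ₗ[R] R)
    (M : (Fin n ⊕ Fin n) →₀ ℕ) (e : R) :
    applyY L (monomial M e) =
      C (L (monomial (msplit M).2 1) * e) * monomial (msplit M).1 1 := by
  classical
  rw [applyY_eq_sum_subset L (s := {M}) MvPolynomial.support_monomial_subset,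
    Finset.sum_singleton, MvPolynomial.coeff_monomial, if_pos rfl]

lemma applyY_sub_left (L L' : MvPolynomial (Fin n) R →ₗ[R] R)
    (P : MvPolynomial (Fin n ⊕ Fin n) R) :
    applyY (L - L') P = applyY L P - applyY L' P := by
  rw [applyY, applyY, applyY, ← Finset.sum_sub_distrib]
  apply Finset.sum_congr rfl
  intro m _
  rw [LinearMap.sub_apply, sub_mul, map_sub, sub_mul]

lemma applyY_toX_monomial_mul_toY (L : MvPolynomial (Fin n) R →ₗ[R] R)
    (a : Fin n →₀ ℕ) (c : R) (B : MvPolynomial (Fin n) R) :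
    applyY L (toX (monomial a c) * toY B) = C (L B * c) * monomial a 1 := by
  have hLB : L B = ∑ b ∈ B.support, B.coeff b * L (monomial b 1) := by
    conv_lhs => rw [← support_sum_monomial_coeff B]
    rw [map_sum]
    apply Finset.sum_congr rfl
    intro b _
    rw [show (monomial b (B.coeff b) : MvPolynomial (Fin n) R)
        = B.coeff b • monomial b 1 by rw [MvPolynomial.smul_monomial, smul_eq_mul, mul_one],
      map_smul, smul_eq_mul]
  conv_lhs => rw [← support_sum_monomial_coeff B]
  rw [map_sum, Finset.mul_sum, applyY_sum]
  rw [Finset.sum_congr rfl (fun b _ => by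
    rw [toX_mul_toY_monomial, applyY_monomial, msplit_mpack,
      show L (monomial b 1) * (c * B.coeff b) = B.coeff b * L (monomial b 1) * c from by
        ring] :
    ∀ b ∈ B.support, applyY L (toX (monomial a c) * toY (monomial b (B.coeff b)))
      = C (B.coeff b * L (monomial b 1) * c) * monomial a 1)]
  rw [hLB, Finset.sum_mul, map_sum, Finset.sum_mul]

lemma applyY_toX_mul_toY (L : MvPolynomial (Fin n) R →ₗ[R] R)
    (A B : MvPolynomial (Fin n) R) :
    applyY L (toX A * toY B) = C (L B) * A := by
  conv_lhs => rw [← support_sum_monomial_coeff A]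
  rw [map_sum, Finset.sum_mul, applyY_sum]
  conv_rhs => rw [← support_sum_monomial_coeff A]
  rw [Finset.mul_sum]
  apply Finset.sum_congr rfl
  intro a _
  rw [applyY_toX_monomial_mul_toY, C_mul_monomial, C_mul_monomial, mul_one]

lemma monomial_eq_toX_mul_toY (m : (Fin n ⊕ Fin n) →₀ ℕ) (c : R) :
    (monomial m c : MvPolynomial (Fin n ⊕ Fin n) R)
      = toX (monomial (msplit m).1 c) * toY (monomial (msplit m).2 1) := by
  rw [toX_mul_toY_monomial, mul_one, mpack_msplit]

lemma applyY_toX_mul (L : MvPolynomial (Fin n) R →ₗ[R] R)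
    (A : MvPolynomial (Fin n) R) (P : MvPolynomial (Fin n ⊕ Fin n) R) :
    applyY L (toX A * P) = A * applyY L P := by
  conv_lhs => rw [← support_sum_monomial_coeff P]
  conv_rhs => rw [← support_sum_monomial_coeff P]
  rw [Finset.mul_sum, applyY_sum, applyY_sum, Finset.mul_sum]
  apply Finset.sum_congr rfl
  intro m _
  rw [monomial_eq_toX_mul_toY, ← mul_assoc, ← map_mul, applyY_toX_mul_toY,
    applyY_toX_mul_toY]
  ring

lemma applyY_toY_mul_monomial (L : MvPolynomial (Fin n) R →ₗ[R] R)
    (G : MvPolynomial (Fin n) R) (m : (Fin n ⊕ Fin n) →₀ ℕ) (c : R) :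
    applyY L (toY G * monomial m c)
      = C (L (G * monomial (msplit m).2 1)) * monomial (msplit m).1 c := by
  rw [monomial_eq_toX_mul_toY, show toY G * (toX (monomial (msplit m).1 c)
      * toY (monomial (msplit m).2 1))
      = toX (monomial (msplit m).1 c) * toY (G * monomial (msplit m).2 1) from by
    rw [map_mul]; ring]
  rw [applyY_toX_mul_toY, C_mul_monomial]

lemma degLE_applyY (L : MvPolynomial (Fin n) R →ₗ[R] R)
    {P : MvPolynomial (Fin n ⊕ Fin n) R} {d : ℤ}
    (h : ∀ m ∈ P.support, L (monomial (msplit m).2 1) = 0 ∨ dsum (msplit m).1 ≤ d) :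
    DegLE (applyY L P) d := by
  rw [applyY]
  apply degLE_sum
  intro m hm
  rcases h m hm with h0 | hd
  · rw [h0, zero_mul, map_zero, zero_mul]
    exact degLE_zero d
  · rw [C_mul_monomial]
    exact degLE_mono (degLE_monomial _ _) hd

end AuxApplyY
section AuxDet
variable {S : Type*} [CommRing S]

lemma det_updateRow_finset_sum {m : ℕ} (A : Matrix (Fin m) (Fin m) S) (j : Fin m)
    {α : Type*} (s : Finset α) (v : α → Fin m → S) :
    (A.updateRow j (∑ i ∈ s, v i)).det = ∑ i ∈ s, (A.updateRow j (v i)).det := by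
  classical
  induction s using Finset.induction_on with
  | empty =>
    rw [Finset.sum_empty, Finset.sum_empty]
    exact Matrix.det_eq_zero_of_row_eq_zero j (fun j' => by rw [Matrix.updateRow_self]; rfl)
  | insert _ _ hx ih =>
    rw [Finset.sum_insert hx, Finset.sum_insert hx, Matrix.det_updateRow_add, ih]

lemma det_eq_sum_mul_minor {m : ℕ} (A : Matrix (Fin m) (Fin m) S) (j : Fin m)
    (r : Fin m → S) (h : A j = r) :
    A.det = ∑ i, r i * (A.updateRow j (Pi.single i 1)).det := by
  classical
  have hr : r = ∑ i, r i • (Pi.single i 1 : Fin m → S) := by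
    funext k
    rw [Finset.sum_apply]
    simp [Pi.single_apply]
  conv_lhs => rw [← Matrix.updateRow_eq_self A j, h, hr]
  rw [det_updateRow_finset_sum]
  apply Finset.sum_congr rfl
  intro i _
  rw [Matrix.det_updateRow_smul]

lemma updateRow_updateRow {m : ℕ} (A : Matrix (Fin m) (Fin m) S) (j : Fin m)
    (r v : Fin m → S) :
    (A.updateRow j r).updateRow j v = A.updateRow j v := by
  classical
  ext k l
  by_cases hk : k = j <;> simp [Matrix.updateRow_apply, hk]

end AuxDet
section AuxDdet
variable {R : Type*} [CommRing R] {n : ℕ}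
variable (f : Fin n → MvPolynomial (Fin n) R)
  (Df : Fin n → Fin n → MvPolynomial (Fin n ⊕ Fin n) R)
  (F : MvPolynomial (Fin n) R) (DF : Fin n → MvPolynomial (Fin n ⊕ Fin n) R)

def ddMat : Matrix (Fin (n+1)) (Fin (n+1)) (MvPolynomial (Fin n ⊕ Fin n) R) :=
  Matrix.of fun k i => if hk : (k : ℕ) < n then
      (if hi : (i : ℕ) < n then Df ⟨i, hi⟩ ⟨k, hk⟩ else DF ⟨k, hk⟩)
    else (if hi : (i : ℕ) < n then toX (f ⟨i, hi⟩) else toX F)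

lemma ddetX_eq_det : ddetX f Df F DF = (ddMat f Df F DF).det := rfl

def Gcol (i : Fin (n+1)) : MvPolynomial (Fin n) R :=
  if hi : (i : ℕ) < n then f ⟨i, hi⟩ else F

def Nmin (i : Fin (n+1)) : MvPolynomial (Fin n ⊕ Fin n) R :=
  ((ddMat f Df F DF).updateRow (Fin.last n) (Pi.single i 1)).det

lemma ddMat_last (i : Fin (n+1)) :
    ddMat f Df F DF (Fin.last n) i = toX (Gcol f F i) := by
  show dite _ _ _ = _
  rw [dif_neg (by simp : ¬ ((Fin.last n : ℕ) < n)), Gcol]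
  by_cases hi : (i : ℕ) < n
  · rw [dif_pos hi, dif_pos hi]
  · rw [dif_neg hi, dif_neg hi]

lemma ddMat_castSucc (k : Fin n) (i : Fin (n+1)) :
    ddMat f Df F DF (Fin.castSucc k) i =
      if hi : (i : ℕ) < n then Df ⟨i, hi⟩ k else DF k := by
  show dite _ _ _ = _
  rw [dif_pos (by simp : ((Fin.castSucc k : Fin (n+1)) : ℕ) < n)]
  have : (⟨((Fin.castSucc k : Fin (n+1)) : ℕ), by simp⟩ : Fin n) = k := by
    apply Fin.ext; simp
  by_cases hi : (i : ℕ) < n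
  · rw [dif_pos hi, dif_pos hi, this]
  · rw [dif_neg hi, dif_neg hi, this]

lemma expandX :
    ddetX f Df F DF = ∑ i, toX (Gcol f F i) * Nmin f Df F DF i := by
  rw [ddetX_eq_det]
  exact det_eq_sum_mul_minor _ _ _ (funext fun i => ddMat_last f Df F DF i)

lemma expandY (hDf : ∀ i, IsDiffDeriv (f i) (Df i)) (hDF : IsDiffDeriv F DF) :
    ddetX f Df F DF = ∑ i, toY (Gcol f F i) * Nmin f Df F DF i := by
  classical
  have hrow : ddMat f Df F DF (Fin.last n) = (fun i => toY (Gcol f F i)) +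
      ∑ k : Fin n, (((X (Sum.inl k) - X (Sum.inr k) : MvPolynomial (Fin n ⊕ Fin n) R)) •
        ddMat f Df F DF (Fin.castSucc k)) := by
    funext i
    rw [Pi.add_apply, Finset.sum_apply, ddMat_last]
    by_cases hi : (i : ℕ) < n
    · have e : ∑ k, (((X (Sum.inl k) - X (Sum.inr k) : MvPolynomial (Fin n ⊕ Fin n) R)) •
            ddMat f Df F DF (Fin.castSucc k)) i
          = ∑ k, (X (Sum.inl k) - X (Sum.inr k)) * Df ⟨i, hi⟩ k :=
        Finset.sum_congr rfl fun k _ => by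
          rw [Pi.smul_apply, smul_eq_mul, ddMat_castSucc, dif_pos hi]
      have hd := hDf ⟨i, hi⟩
      unfold IsDiffDeriv at hd
      rw [e, hd, Gcol, dif_pos hi]
      ring
    · have e : ∑ k, (((X (Sum.inl k) - X (Sum.inr k) : MvPolynomial (Fin n ⊕ Fin n) R)) •
            ddMat f Df F DF (Fin.castSucc k)) i
          = ∑ k, (X (Sum.inl k) - X (Sum.inr k)) * DF k :=
        Finset.sum_congr rfl fun k _ => by
          rw [Pi.smul_apply, smul_eq_mul, ddMat_castSucc, dif_neg hi]
      have hd := hDF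
      unfold IsDiffDeriv at hd
      rw [e, hd, Gcol, dif_neg hi]
      ring
  have h1 : ddetX f Df F DF
      = ((ddMat f Df F DF).updateRow (Fin.last n) (fun i => toY (Gcol f F i))).det := by
    rw [ddetX_eq_det, ← Matrix.updateRow_eq_self (ddMat f Df F DF) (Fin.last n), hrow,
      updateRow_updateRow, Matrix.det_updateRow_add, det_updateRow_finset_sum]
    have hz : ∀ k : Fin n,
        ((ddMat f Df F DF).updateRow (Fin.last n)
          (((X (Sum.inl k) - X (Sum.inr k) : MvPolynomial (Fin n ⊕ Fin n) R)) •
            ddMat f Df F DF (Fin.castSucc k))).det = 0 := by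
      intro k
      rw [Matrix.det_updateRow_smul,
        Matrix.det_updateRow_eq_zero (ne_of_lt (Fin.castSucc_lt_last k)), mul_zero]
    rw [Finset.sum_congr rfl (fun k _ => hz k), Finset.sum_const_zero, add_zero]
  rw [h1, det_eq_sum_mul_minor _ (Fin.last n) (fun i => toY (Gcol f F i))
    (Matrix.updateRow_self)]
  apply Finset.sum_congr rfl
  intro i _
  rw [updateRow_updateRow]
  rfl

lemma degLE_Nmin (t : Fin n → ℤ) (dd : ℤ)
    (hDfdeg : ∀ i k, DegLE (Df i k) (t i - 1)) (hDFdeg : ∀ k, DegLE (DF k) dd)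
    (i : Fin (n+1)) :
    DegLE (Nmin f Df F DF i)
      ((∑ j : Fin n, (t j - 1)) + dd
        - (if hi : (i : ℕ) < n then t ⟨i, hi⟩ - 1 else dd)) := by
  classical
  set cB : Fin (n+1) → ℤ := fun j => if hj : (j : ℕ) < n then t ⟨j, hj⟩ - 1 else dd
    with hcB
  have hsum : ∑ j, cB j = (∑ j : Fin n, (t j - 1)) + dd := by
    rw [Fin.sum_univ_castSucc]
    congr 1
    · apply Finset.sum_congr rfl
      intro j _
      have hlt : ((Fin.castSucc j : Fin (n+1)) : ℕ) < n := by simp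
      rw [hcB]
      simp only
      rw [dif_pos hlt]
      have he : (⟨((Fin.castSucc j : Fin (n+1)) : ℕ), hlt⟩ : Fin n) = j :=
        Fin.ext (by simp)
      rw [he]
    · rw [hcB]; simp
  rw [Nmin]
  apply degLE_det
  intro τ
  by_cases hτ : τ i = Fin.last n
  · apply degLE_mono (degLE_prod (b := fun k => if k = i then 0 else cB k) ?_)
    · have e1 : ∑ k, (if k = i then 0 else cB k) = ∑ k, cB k - cB i := by
        rw [← Finset.add_sum_erase _ cB (Finset.mem_univ i),
          ← Finset.add_sum_erase _ (fun k => if k = i then 0 else cB k)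
            (Finset.mem_univ i), if_pos rfl,
          Finset.sum_congr rfl (fun k hk => if_neg (Finset.ne_of_mem_erase hk))]
        ring
      rw [e1, hsum]
    · intro k _
      by_cases hk : k = i
      · subst hk
        rw [if_pos rfl, hτ, Matrix.updateRow_self, Pi.single_eq_same]
        exact degLE_one
      · rw [if_neg hk]
        have hne : τ k ≠ Fin.last n := fun hc => hk (τ.injective (hc.trans hτ.symm))
        rw [Matrix.updateRow_ne hne]
        have hlt : (τ k : ℕ) < n := Fin.val_lt_last hne
        show DegLE (dite _ _ _) _
        rw [dif_pos hlt, hcB]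
        simp only
        by_cases hk2 : (k : ℕ) < n
        · rw [dif_pos hk2, dif_pos hk2]
          exact hDfdeg _ _
        · rw [dif_neg hk2, dif_neg hk2]
          exact hDFdeg _
  · have hk : τ (τ.symm (Fin.last n)) = Fin.last n := τ.apply_symm_apply _
    have hki : τ.symm (Fin.last n) ≠ i := fun h => hτ (h ▸ hk)
    rw [Finset.prod_eq_zero (Finset.mem_univ (τ.symm (Fin.last n)))]
    · exact degLE_zero _
    · rw [hk, Matrix.updateRow_self, Pi.single_eq_of_ne hki]

end AuxDdet
section AuxFinal
variable {R : Type*} [CommRing R] {n : ℕ}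

lemma mdeg_zero {σ S : Type*} [CommRing S] : mdeg (0 : MvPolynomial σ S) = ⊥ := by
  simp [mdeg]

lemma degLE_of_monotonous {σ S σ' S' : Type*} [CommRing S] [CommRing S'] {P : MvPolynomial σ S} {Q : MvPolynomial σ' S'} {d : ℤ}
    (h : mdeg P + 1 ≤ mdeg Q) (hQ : mdeg Q ≤ ((d + 1 : ℤ) : WithBot ℤ)) : DegLE P d := by
  intro m hm
  have h1 : ((dsum m : ℤ) : WithBot ℤ) ≤ mdeg P :=
    Finset.le_sup (f := fun m => (((m.sum fun _ e => e : ℕ) : ℤ) : WithBot ℤ)) hm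
  have h2 : ((dsum m : ℤ) : WithBot ℤ) + 1 ≤ ((d + 1 : ℤ) : WithBot ℤ) :=
    le_trans (add_le_add h1 le_rfl) (le_trans h hQ)
  have h3 : ((dsum m + 1 : ℤ) : WithBot ℤ) ≤ ((d + 1 : ℤ) : WithBot ℤ) := by
    push_cast
    exact_mod_cast h2
  have h4 := WithBot.coe_le_coe.mp h3
  omega

lemma mul_mem_boundedSpan (f : Fin n → MvPolynomial (Fin n) R) (j : Fin n)
    (g : MvPolynomial (Fin n) R) (d : ℤ)
    (hg : DegLE g (d - ((f j).totalDegree : ℤ))) :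
    f j * g ∈ boundedSpan f ((d : ℤ) : WithBot ℤ) := by
  classical
  refine ⟨fun i => if i = j then g else 0, ?_, ?_⟩
  · dsimp only
    rw [Finset.sum_eq_single j (fun i _ hij => by rw [if_neg hij, mul_zero])
      (fun h => absurd (Finset.mem_univ j) h), if_pos rfl]
  · intro i
    dsimp only
    by_cases hij : i = j
    · subst hij
      rw [if_pos rfl]
      have h1 : mdeg (f i) + mdeg g
          ≤ (((f i).totalDegree : ℤ) : WithBot ℤ) + ((d - ((f i).totalDegree : ℤ) : ℤ) : WithBot ℤ) :=
        add_le_add (mdeg_le_totalDegree _) (mdeg_le_coe_iff.mpr hg)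
      refine le_trans h1 ?_
      rw [← WithBot.coe_add]
      apply WithBot.coe_le_coe.mpr
      omega
    · rw [if_neg hij, mdeg_zero, WithBot.add_bot]
      exact bot_le

lemma applyY_eq_zero (L : MvPolynomial (Fin n) R →ₗ[R] R)
    {P : MvPolynomial (Fin n ⊕ Fin n) R}
    (h : ∀ m ∈ P.support, L (monomial (msplit m).2 1) = 0) : applyY L P = 0 := by
  rw [applyY]
  apply Finset.sum_eq_zero
  intro m hm
  rw [h m hm, zero_mul, map_zero, zero_mul]

end AuxFinal
/-- Theorem 3.3: on polynomials of degree `≤ δ_f + δ₁ + δ₂ + 1`, the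
extended functional depends only on the restriction of `L₁` to `R[x^{≤ δ_f + δ₁}]`
and of `L₂` to `R[x^{≤ δ_f + δ₂}]`. -/
theorem extension_independent_of_L {R : Type*} [CommRing R] {n : ℕ}
    (f : Fin n → MvPolynomial (Fin n) R) (hf : ∀ i, (1 : WithBot ℤ) ≤ mdeg (f i))
    (δ₁ δ₂ : ℤ) (hδ₁ : 0 ≤ δ₁) (hδ₂ : 0 ≤ δ₂)
    (L₁ L₁' L₂ L₂' : MvPolynomial (Fin n) R →ₗ[R] R)
    (hL₁ : Annuls L₁ (boundedSpan f ((deltaF f + δ₁ : ℤ) : WithBot ℤ)))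
    (hL₁' : Annuls L₁' (boundedSpan f ((deltaF f + δ₁ : ℤ) : WithBot ℤ)))
    (hL₂ : Annuls L₂ (boundedSpan f ((deltaF f + δ₂ : ℤ) : WithBot ℤ)))
    (hL₂' : Annuls L₂' (boundedSpan f ((deltaF f + δ₂ : ℤ) : WithBot ℤ)))
    (hagree₁ : ∀ G : MvPolynomial (Fin n) R,
      mdeg G ≤ ((deltaF f + δ₁ : ℤ) : WithBot ℤ) → L₁' G = L₁ G)
    (hagree₂ : ∀ G : MvPolynomial (Fin n) R,
      mdeg G ≤ ((deltaF f + δ₂ : ℤ) : WithBot ℤ) → L₂' G = L₂ G)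
    (Df : Fin n → Fin n → MvPolynomial (Fin n ⊕ Fin n) R)
    (hDf : ∀ i, IsDiffDeriv (f i) (Df i) ∧ IsMonotonous (f i) (Df i))
    (F : MvPolynomial (Fin n) R)
    (hF : mdeg F ≤ ((deltaF f + δ₁ + δ₂ + 1 : ℤ) : WithBot ℤ))
    (DF : Fin n → MvPolynomial (Fin n ⊕ Fin n) R)
    (hDF : IsDiffDeriv F DF ∧ IsMonotonous F DF) :
    L₁' (applyY L₂' (ddetX f Df F DF)) = L₁ (applyY L₂ (ddetX f Df F DF)) := by
  classical
  have hS : (∑ j : Fin n, (((f j).totalDegree : ℤ) - 1)) = deltaF f := rfl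
  have hDfdeg : ∀ i k, DegLE (Df i k) (((f i).totalDegree : ℤ) - 1) := by
    intro i k
    apply degLE_of_monotonous ((hDf i).2 k)
    have he : ((f i).totalDegree : ℤ) - 1 + 1 = ((f i).totalDegree : ℤ) := by ring
    rw [he]
    exact mdeg_le_totalDegree _
  have hDFdeg : ∀ k, DegLE (DF k) (deltaF f + δ₁ + δ₂) := by
    intro k
    apply degLE_of_monotonous (hDF.2 k)
    exact hF
  have hNdeg : ∀ i, DegLE (Nmin f Df F DF i)
      (deltaF f + (deltaF f + δ₁ + δ₂)
        - (if hi : (i : ℕ) < n then ((f ⟨i, hi⟩).totalDegree : ℤ) - 1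
           else (deltaF f + δ₁ + δ₂))) := by
    intro i
    have h := degLE_Nmin f Df F DF (fun j => ((f j).totalDegree : ℤ))
      (deltaF f + δ₁ + δ₂) hDfdeg hDFdeg i
    rwa [hS] at h
  have factA : ∀ L : MvPolynomial (Fin n) R →ₗ[R] R,
      Annuls L (boundedSpan f ((deltaF f + δ₂ : ℤ) : WithBot ℤ)) →
      DegLE (applyY L (ddetX f Df F DF)) (deltaF f + δ₁) := by
    intro L hL
    rw [expandY f Df F DF (fun i => (hDf i).1) hDF.1, applyY_sum]
    apply degLE_sum
    intro i _
    rw [show toY (Gcol f F i) * Nmin f Df F DF i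
        = ∑ m ∈ (Nmin f Df F DF i).support,
            toY (Gcol f F i) * monomial m ((Nmin f Df F DF i).coeff m) from by
      rw [← Finset.mul_sum, support_sum_monomial_coeff]]
    rw [applyY_sum]
    apply degLE_sum
    intro m hm
    rw [applyY_toY_mul_monomial]
    have hdm := hNdeg i m hm
    have hsplit := dsum_split m
    have h2nn := dsum_nonneg (msplit m).2
    by_cases hi : (i : ℕ) < n
    · rw [dif_pos hi] at hdm
      have hG : Gcol f F i = f ⟨i, hi⟩ := by rw [Gcol, dif_pos hi]
      by_cases hlow :
          ((f ⟨i, hi⟩).totalDegree : ℤ) + dsum (msplit m).2 ≤ deltaF f + δ₂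
      · have hz : L (Gcol f F i * monomial (msplit m).2 1) = 0 := by
          rw [hG]
          exact hL _ (mul_mem_boundedSpan f ⟨i, hi⟩ _ (deltaF f + δ₂)
            (degLE_mono (degLE_monomial _ _) (by omega)))
        rw [hz, map_zero, zero_mul]
        exact degLE_zero _
      · rw [C_mul_monomial]
        apply degLE_mono (degLE_monomial _ _)
        omega
    · rw [dif_neg hi] at hdm
      rw [C_mul_monomial]
      apply degLE_mono (degLE_monomial _ _)
      omega
  have hllow : ∀ G : MvPolynomial (Fin n) R, DegLE G (deltaF f + δ₂) →
      (L₂' - L₂) G = 0 := by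
    intro G hG
    rw [LinearMap.sub_apply, hagree₂ G (mdeg_le_coe_iff.mpr hG), sub_self]
  have factB : L₁ (applyY (L₂' - L₂) (ddetX f Df F DF)) = 0 := by
    rw [expandX, applyY_sum, map_sum]
    apply Finset.sum_eq_zero
    intro i _
    rw [applyY_toX_mul]
    by_cases hi : (i : ℕ) < n
    · rw [show Gcol f F i = f ⟨i, hi⟩ from by rw [Gcol, dif_pos hi]]
      apply hL₁
      apply mul_mem_boundedSpan f ⟨i, hi⟩ _ (deltaF f + δ₁)
      apply degLE_applyY
      intro m hm
      have hdm := hNdeg i m hm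
      rw [dif_pos hi] at hdm
      have hsplit := dsum_split m
      by_cases hlow : dsum (msplit m).2 ≤ deltaF f + δ₂
      · left
        exact hllow _ (degLE_mono (degLE_monomial _ _) hlow)
      · right
        omega
    · have hz : applyY (L₂' - L₂) (Nmin f Df F DF i) = 0 := by
        apply applyY_eq_zero
        intro m hm
        have hdm := hNdeg i m hm
        rw [dif_neg hi] at hdm
        have hsplit := dsum_split m
        have h1nn := dsum_nonneg (msplit m).1
        apply hllow
        apply degLE_mono (degLE_monomial _ _)
        omega
      rw [hz, mul_zero, map_zero]
  have e1 : L₁' (applyY L₂' (ddetX f Df F DF)) = L₁ (applyY L₂' (ddetX f Df F DF)) :=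
    hagree₁ _ (mdeg_le_coe_iff.mpr (factA L₂' hL₂'))
  have e2 : applyY L₂' (ddetX f Df F DF)
      = applyY L₂ (ddetX f Df F DF) + applyY (L₂' - L₂) (ddetX f Df F DF) := by
    rw [applyY_sub_left]
    ring
  rw [e1, e2, map_add, factB, add_zero]

end
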